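/- arXiv:0911.1167 — 4 statements merged into one kernel-verified Lean document; each statement's English description precedes it below -/
import Mathlib

section
/- The map σ(z, w₂, w₃) = (w₃, -w₂ + z·w₃ + 1, z) preserves the real submanifold M ⊂ ℂ³ defined by Im w₂ = Re z / Im z + γ · ln(Im z) and Im w₃ = 1 / Im z (for points with Im z > 0), for every real parameter γ. That is, if (z, w₂, w₃) satisfies both defining equations with Im z > 0, then so does σ(z, w₂, w₃). -/
/-- σ(z,w₂,w₃) = (w₃, -w₂+z·w₃+1, z) preserves the surface
    Im w₂ = Re z / Im z + γ ln (Im z), Im w₃ = 1 / Im z (where Im z > 0). -/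
theorem sigma_preserves_Ib (γ : ℝ) (z w₂ w₃ : ℂ)
    (hy : 0 < z.im)
    (h₂ : w₂.im = z.re / z.im + γ * Real.log z.im)
    (h₃ : w₃.im = 1 / z.im) :
    0 < w₃.im ∧
    (-w₂ + z * w₃ + 1).im = w₃.re / w₃.im + γ * Real.log w₃.im ∧
    z.im = 1 / w₃.im := by
  have hy0 : z.im ≠ 0 := ne_of_gt hy
  have hpos : 0 < w₃.im := by rw [h₃]; positivity
  refine ⟨hpos, ?_, by rw [h₃, one_div_one_div]⟩
  rw [Complex.add_im, Complex.add_im, Complex.neg_im, Complex.mul_im, h₂, h₃,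
    Real.log_div one_ne_zero hy0, Real.log_one, Complex.one_im]
  field_simp
  ring
end

section
/- The cubic {(z, w₂, w₃) ∈ ℂ³ : Im w₂ = |z|², Im w₃ = 2|z|²·Re z} is mapped biholomorphically onto the tube {(z, w₂, w₃) : Im w₂ = (Im z)², Im w₃ = (Im z)³} by a polynomial transformation. Specifically, there exists a polynomial biholomorphism of ℂ³ carrying the first surface onto the second. -/
/-- F : ℂ³ → ℂ³ is a polynomial map. -/
def IsPolyMap (F : ℂ × ℂ × ℂ → ℂ × ℂ × ℂ) : Prop :=
  ∃ P₁ P₂ P₃ : MvPolynomial (Fin 3) ℂ, ∀ p : ℂ × ℂ × ℂ,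
    F p = (MvPolynomial.eval ![p.1, p.2.1, p.2.2] P₁,
           MvPolynomial.eval ![p.1, p.2.1, p.2.2] P₂,
           MvPolynomial.eval ![p.1, p.2.1, p.2.2] P₃)

/-- The cubic Im w₂ = |z|², Im w₃ = 2|z|²Re z is polynomially biholomorphic to the
    tube Im w₂ = (Im z)², Im w₃ = (Im z)³. -/
theorem cubic_poly_equiv_tube :
    ∃ F G : ℂ × ℂ × ℂ → ℂ × ℂ × ℂ,
      IsPolyMap F ∧ IsPolyMap G ∧
      (∀ p, G (F p) = p) ∧ (∀ p, F (G p) = p) ∧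
      F '' {p : ℂ × ℂ × ℂ |
              p.2.1.im = ‖p.1‖ ^ 2 ∧
              p.2.2.im = 2 * ‖p.1‖ ^ 2 * p.1.re} =
        {p : ℂ × ℂ × ℂ | p.2.1.im = p.1.im ^ 2 ∧ p.2.2.im = p.1.im ^ 3} := by
  set F : ℂ × ℂ × ℂ → ℂ × ℂ × ℂ := fun p =>
    (Complex.I * p.1,
     (1/2 : ℂ) * p.2.1 + (1/2 : ℂ) * Complex.I * (p.1 * p.1),
     (3/8 : ℂ) * p.2.2 + (1/4 : ℂ) * Complex.I * (p.1 * p.1 * p.1)) with hF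
  set G : ℂ × ℂ × ℂ → ℂ × ℂ × ℂ := fun q =>
    (-Complex.I * q.1,
     (2 : ℂ) * q.2.1 + Complex.I * (q.1 * q.1),
     (8/3 : ℂ) * q.2.2 + (2/3 : ℂ) * (q.1 * q.1 * q.1)) with hG
  have hGF : ∀ p, G (F p) = p := by
    intro p
    simp only [hF, hG]
    refine Prod.ext ?_ (Prod.ext ?_ ?_)
    · show -Complex.I * (Complex.I * p.1) = p.1
      linear_combination (-p.1) * Complex.I_sq
    · show (2:ℂ) * ((1/2 : ℂ) * p.2.1 + (1/2 : ℂ) * Complex.I * (p.1 * p.1))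
        + Complex.I * (Complex.I * p.1 * (Complex.I * p.1)) = p.2.1
      linear_combination (Complex.I * p.1 * p.1) * Complex.I_sq
    · show (8/3:ℂ) * ((3/8 : ℂ) * p.2.2 + (1/4 : ℂ) * Complex.I * (p.1 * p.1 * p.1))
        + (2/3 : ℂ) * (Complex.I * p.1 * (Complex.I * p.1) * (Complex.I * p.1)) = p.2.2
      linear_combination ((2/3 : ℂ) * Complex.I * p.1 * p.1 * p.1) * Complex.I_sq
  have hFG : ∀ q, F (G q) = q := by
    intro q
    simp only [hF, hG]
    refine Prod.ext ?_ (Prod.ext ?_ ?_)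
    · show Complex.I * (-Complex.I * q.1) = q.1
      linear_combination (-q.1) * Complex.I_sq
    · show (1/2:ℂ) * ((2 : ℂ) * q.2.1 + Complex.I * (q.1 * q.1))
        + (1/2 : ℂ) * Complex.I * (-Complex.I * q.1 * (-Complex.I * q.1)) = q.2.1
      linear_combination ((1/2 : ℂ) * Complex.I * q.1 * q.1) * Complex.I_sq
    · show (3/8:ℂ) * ((8/3 : ℂ) * q.2.2 + (2/3 : ℂ) * (q.1 * q.1 * q.1))
        + (1/4 : ℂ) * Complex.I * (-Complex.I * q.1 * (-Complex.I * q.1) * (-Complex.I * q.1)) = q.2.2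
      linear_combination ((1/4 : ℂ) * q.1 * q.1 * q.1 * (1 - Complex.I * Complex.I)) * Complex.I_sq
  refine ⟨F, G, ?_, ?_, hGF, hFG, ?_⟩
  · refine ⟨MvPolynomial.C Complex.I * MvPolynomial.X 0,
      MvPolynomial.C (1/2 : ℂ) * MvPolynomial.X 1
        + MvPolynomial.C ((1/2 : ℂ) * Complex.I) * (MvPolynomial.X 0 * MvPolynomial.X 0),
      MvPolynomial.C (3/8 : ℂ) * MvPolynomial.X 2
        + MvPolynomial.C ((1/4 : ℂ) * Complex.I) * (MvPolynomial.X 0 * MvPolynomial.X 0 * MvPolynomial.X 0),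
      ?_⟩
    intro p
    simp only [hF, MvPolynomial.eval_add, MvPolynomial.eval_mul, MvPolynomial.eval_C,
      MvPolynomial.eval_X, Matrix.cons_val_zero, Matrix.cons_val_one, Matrix.head_cons,
      Matrix.cons_val_two, Matrix.tail_cons]
  · refine ⟨MvPolynomial.C (-Complex.I) * MvPolynomial.X 0,
      MvPolynomial.C (2 : ℂ) * MvPolynomial.X 1
        + MvPolynomial.C Complex.I * (MvPolynomial.X 0 * MvPolynomial.X 0),
      MvPolynomial.C (8/3 : ℂ) * MvPolynomial.X 2
        + MvPolynomial.C (2/3 : ℂ) * (MvPolynomial.X 0 * MvPolynomial.X 0 * MvPolynomial.X 0),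
      ?_⟩
    intro q
    simp only [hG, MvPolynomial.eval_add, MvPolynomial.eval_mul, MvPolynomial.eval_C,
      MvPolynomial.eval_X, Matrix.cons_val_zero, Matrix.cons_val_one, Matrix.head_cons,
      Matrix.cons_val_two, Matrix.tail_cons]
  · ext q
    constructor
    · rintro ⟨p, ⟨h2, h3⟩, rfl⟩
      rw [Complex.sq_norm, Complex.normSq_apply] at h2 h3
      simp only [hF, Set.mem_setOf_eq, Complex.add_im, Complex.mul_im, Complex.mul_re,
        Complex.I_re, Complex.I_im, Complex.div_im, Complex.div_re]
      constructor
      · norm_num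
        rw [h2]; ring
      · norm_num
        rw [h3]; ring
    · rintro ⟨h2, h3⟩
      refine ⟨G q, ⟨?_, ?_⟩, hFG q⟩
      · rw [Complex.sq_norm, Complex.normSq_apply]
        simp only [hG, Complex.add_im, Complex.mul_im, Complex.mul_re,
          Complex.I_re, Complex.I_im, Complex.neg_re, Complex.neg_im]
        norm_num
        rw [h2]
        ring
      · rw [Complex.sq_norm, Complex.normSq_apply]
        simp only [hG, Complex.add_im, Complex.mul_im, Complex.mul_re,
          Complex.I_re, Complex.I_im, Complex.neg_re, Complex.neg_im]
        norm_num
        rw [h3]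
        ring
end

section
/- For the tube surface M = {(z, w₂, w₃) ∈ ℂ³ : Im w₂ = cos(Im z), Im w₃ = sin(Im z)}, the abelian group ℝ³ of real translations (z, w₂, w₃) ↦ (z + a₁, w₂ + a₂, w₃ + a₃), together with the one-parameter group (z, w₂, w₃) ↦ (z + t, cos t · w₂ − sin t · w₃, sin t · w₂ + cos t · w₃), acts on M by CR-automorphisms (i.e., each such map preserves M), and the combined group acts transitively on M. -/
/-- Homogeneity of the tube M : Im w₂ = cos(Im z), Im w₃ = sin(Im z): the real
    translations and the one-parameter affine group
    (z, w₂, w₃) ↦ (z + it, cos t·w₂ - sin t·w₃, sin t·w₂ + cos t·w₃)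
    preserve M and together act transitively on M. -/
theorem tube_cos_sin_homogeneous :
    let M : Set (ℂ × ℂ × ℂ) :=
      {p | p.2.1.im = Real.cos p.1.im ∧ p.2.2.im = Real.sin p.1.im}
    let T : ℝ → ℝ → ℝ → (ℂ × ℂ × ℂ) → (ℂ × ℂ × ℂ) := fun a₁ a₂ a₃ p =>
      (p.1 + (a₁ : ℂ), p.2.1 + (a₂ : ℂ), p.2.2 + (a₃ : ℂ))
    let R : ℝ → (ℂ × ℂ × ℂ) → (ℂ × ℂ × ℂ) := fun t p =>
      (p.1 + Complex.I * (t : ℂ),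
       (Real.cos t : ℂ) * p.2.1 - (Real.sin t : ℂ) * p.2.2,
       (Real.sin t : ℂ) * p.2.1 + (Real.cos t : ℂ) * p.2.2)
    (∀ a₁ a₂ a₃ : ℝ, ∀ p ∈ M, T a₁ a₂ a₃ p ∈ M) ∧
    (∀ t : ℝ, ∀ p ∈ M, R t p ∈ M) ∧
    (∀ p ∈ M, ∀ q ∈ M, ∃ t a₁ a₂ a₃ : ℝ, T a₁ a₂ a₃ (R t p) = q) := by
  intro M T R
  refine ⟨?_, ?_, ?_⟩
  · rintro a₁ a₂ a₃ p ⟨h2, h3⟩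
    simp [M, T, h2, h3]
  · rintro t p ⟨h2, h3⟩
    constructor
    · simp [R, h2, h3, Real.cos_add, Complex.cos_ofReal_re, Complex.sin_ofReal_re]
      ring
    · simp [R, h2, h3, Real.sin_add, Complex.cos_ofReal_re, Complex.sin_ofReal_re]
      ring
  · rintro p ⟨h2, h3⟩ q ⟨k2, k3⟩
    set t := q.1.im - p.1.im with ht
    refine ⟨t, q.1.re - (R t p).1.re, q.2.1.re - (R t p).2.1.re,
      q.2.2.re - (R t p).2.2.re, ?_⟩
    simp only [T]
    refine Prod.ext ?_ (Prod.ext ?_ ?_) <;> apply Complex.ext <;>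
      simp [R, h2, h3, k2, k3, Complex.cos_ofReal_re, Complex.sin_ofReal_re]
    · ring
    · rw [show Real.cos t * Real.cos p.1.im - Real.sin t * Real.sin p.1.im
        = Real.cos (p.1.im + t) by rw [Real.cos_add]; ring]
      simp [ht]
    · rw [show Real.sin t * Real.cos p.1.im + Real.cos t * Real.sin p.1.im
        = Real.sin (p.1.im + t) by rw [Real.sin_add]; ring]
      simp [ht]
end

section
/- For the map Φ(z, w₂, w₃) = (z, 2w₂ − z·w₃, w₃) of ℂ³, the pushforward of the vector field X₄ = (qz − w₃)·∂/∂z + (2qw₂ + z²/2 − w₃²/2)·∂/∂w₂ + (z + qw₃)·∂/∂w₃ under Φ equals the affine vector field (qz − w₃)·∂/∂z + 2q·w₂·∂/∂w₂ + (z + qw₃)·∂/∂w₃ in the new coordinates. -/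
/-- Under Φ(z,w₂,w₃) = (z, 2w₂ - z·w₃, w₃), the field
    X₄ = (qz - w₃)∂z + (2qw₂ + z²/2 - w₃²/2)∂w₂ + (z + qw₃)∂w₃ pushes forward to the
    affine field (qz - w₃)∂z + 2qw₂∂w₂ + (z + qw₃)∂w₃. -/
theorem pushforward_typeIIIb (q : ℝ) :
    let Φ : ℂ × ℂ × ℂ → ℂ × ℂ × ℂ := fun p => (p.1, 2 * p.2.1 - p.1 * p.2.2, p.2.2)
    let X : ℂ × ℂ × ℂ → ℂ × ℂ × ℂ := fun p =>
      ((q : ℂ) * p.1 - p.2.2,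
       2 * (q : ℂ) * p.2.1 + p.1 ^ 2 / 2 - p.2.2 ^ 2 / 2,
       p.1 + (q : ℂ) * p.2.2)
    let Y : ℂ × ℂ × ℂ → ℂ × ℂ × ℂ := fun p =>
      ((q : ℂ) * p.1 - p.2.2, 2 * (q : ℂ) * p.2.1, p.1 + (q : ℂ) * p.2.2)
    ∀ p : ℂ × ℂ × ℂ, fderiv ℂ Φ p (X p) = Y (Φ p) := by
  intro Φ X Y p
  have h1 : HasFDerivAt (fun p : ℂ × ℂ × ℂ => p.1)
      (ContinuousLinearMap.fst ℂ ℂ (ℂ × ℂ)) p := hasFDerivAt_fst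
  have h2 : HasFDerivAt (fun p : ℂ × ℂ × ℂ => p.2.1)
      ((ContinuousLinearMap.fst ℂ ℂ ℂ).comp (ContinuousLinearMap.snd ℂ ℂ (ℂ × ℂ))) p :=
    hasFDerivAt_fst.comp p hasFDerivAt_snd
  have h3 : HasFDerivAt (fun p : ℂ × ℂ × ℂ => p.2.2)
      ((ContinuousLinearMap.snd ℂ ℂ ℂ).comp (ContinuousLinearMap.snd ℂ ℂ (ℂ × ℂ))) p :=
    hasFDerivAt_snd.comp p hasFDerivAt_snd
  have hmid := (h2.const_mul (2 : ℂ)).sub (h1.mul h3)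
  have hΦ : HasFDerivAt Φ _ p := h1.prodMk (hmid.prodMk h3)
  rw [hΦ.fderiv]
  simp [Φ, X, Y]
  ring
end
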